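/- arXiv:1702.05299 — 8 statements merged into one kernel-verified Lean document; each statement's English description precedes it below -/
import Mathlib

section
/- Let f : ℤ^d → ℂ satisfy (-Δ + V) f = 0 on ℤ^d for the discrete Laplacian Δ and an arbitrary potential V : ℤ^d → ℝ. If f vanishes on the slab {j ∈ ℤ^d : j₁ = k or j₁ = k+1} of width 2 for some k ∈ ℤ, then f ≡ 0 on ℤ^d. -/
/-- Discrete Laplacian on `ℤ^d`: `(Δf)(i) = Σ_{j ∼ i} f(j) − 2d·f(i)`. -/
noncomputable def discreteLaplacian (d : ℕ) (f : (Fin d → ℤ) → ℂ) (i : Fin d → ℤ) : ℂ :=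
  (∑ k : Fin d,
    (f (Function.update i k (i k + 1)) + f (Function.update i k (i k - 1))))
  - 2 * d * f i

/-- Unique continuation from the slab `{j : j₁ = k or j₁ = k+1}` of width 2
for solutions of `(-Δ + V) f = 0` on `ℤ^d`. -/
theorem uc_from_width_two_slab (d : ℕ) (hd : 0 < d) (k : ℤ)
    (V : (Fin d → ℤ) → ℝ) (f : (Fin d → ℤ) → ℂ)
    (heq : ∀ i, -discreteLaplacian d f i + (V i : ℂ) * f i = 0)
    (hvan : ∀ j : Fin d → ℤ, (j ⟨0, hd⟩ = k ∨ j ⟨0, hd⟩ = k + 1) → f j = 0) :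
    ∀ j, f j = 0 := by
  set z : Fin d := ⟨0, hd⟩ with hz
  have key : ∀ i : Fin d → ℤ, f i = 0 →
      (∀ m : Fin d, m ≠ z → f (Function.update i m (i m + 1)) = 0 ∧
        f (Function.update i m (i m - 1)) = 0) →
      f (Function.update i z (i z + 1)) + f (Function.update i z (i z - 1)) = 0 := by
    intro i h0 hside
    have h := heq i
    unfold discreteLaplacian at h
    rw [Fintype.sum_eq_single z (fun m hm => by
      rw [(hside m hm).1, (hside m hm).2]; ring)] at h
    rw [h0] at h
    linear_combination -h
  have up : ∀ n : ℕ, ∀ j : Fin d → ℤ, (j z = k + n ∨ j z = k + n + 1) → f j = 0 := by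
    intro n
    induction n with
    | zero => intro j hj; apply hvan; simpa using hj
    | succ n ih =>
      intro j hj
      rcases hj with hj | hj
      · exact ih j (Or.inr (by rw [hj]; push_cast; ring))
      · set i : Fin d → ℤ := Function.update j z (k + n + 1) with hi
        have hiz : i z = k + n + 1 := Function.update_self z _ j
        have h0 : f i = 0 := ih i (Or.inr hiz)
        have hside : ∀ m : Fin d, m ≠ z → f (Function.update i m (i m + 1)) = 0 ∧
            f (Function.update i m (i m - 1)) = 0 := by
          intro m hm
          constructor <;> exact ih _ (Or.inr (by
            rw [Function.update_of_ne (Ne.symm hm)]; exact hiz))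
        have hdown : f (Function.update i z (i z - 1)) = 0 := by
          apply ih
          left
          rw [Function.update_self, hiz]; ring
        have := key i h0 hside
        rw [hdown, add_zero] at this
        have hup : Function.update i z (i z + 1) = j := by
          rw [hiz, hi, Function.update_idem]
          have : k + ↑n + 1 + 1 = j z := by rw [hj]; push_cast; ring
          rw [this, Function.update_eq_self]
        rwa [hup] at this
  have down : ∀ n : ℕ, ∀ j : Fin d → ℤ, (j z = k + 1 - n ∨ j z = k - n) → f j = 0 := by
    intro n
    induction n with
    | zero => intro j hj; apply hvan; omega
    | succ n ih =>
      intro j hj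
      rcases hj with hj | hj
      · exact ih j (Or.inr (by rw [hj]; push_cast; ring))
      · set i : Fin d → ℤ := Function.update j z (k - n) with hi
        have hiz : i z = k - n := Function.update_self z _ j
        have h0 : f i = 0 := ih i (Or.inr hiz)
        have hside : ∀ m : Fin d, m ≠ z → f (Function.update i m (i m + 1)) = 0 ∧
            f (Function.update i m (i m - 1)) = 0 := by
          intro m hm
          constructor <;> exact ih _ (Or.inr (by
            rw [Function.update_of_ne (Ne.symm hm)]; exact hiz))
        have hupz : f (Function.update i z (i z + 1)) = 0 := by
          apply ih
          left
          rw [Function.update_self, hiz]; ring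
        have := key i h0 hside
        rw [hupz, zero_add] at this
        have hdn : Function.update i z (i z - 1) = j := by
          rw [hiz, hi, Function.update_idem]
          have : k - ↑n - 1 = j z := by rw [hj]; push_cast; ring
          rw [this, Function.update_eq_self]
        rwa [hdn] at this
  intro j
  rcases le_or_gt k (j z) with h | h
  · refine up (j z - k).toNat j (Or.inl ?_)
    rw [Int.toNat_of_nonneg (by omega)]; ring
  · refine down (k - j z).toNat j (Or.inr ?_)
    rw [Int.toNat_of_nonneg (by omega)]; ring
end

section
/- Let f : ℤ^d → ℂ satisfy (-Δ + V) f = 0 on ℤ^d for the discrete Laplacian Δ and an arbitrary potential V : ℤ^d → ℝ. If f has bounded (finite) support, then f ≡ 0. In other words, the discrete Schrödinger operator on ℤ^d admits no nonzero finitely supported eigenfunctions. -/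
/-- The discrete Schrödinger operator `-Δ + V` on `ℤ^d` admits no nonzero
finitely supported eigenfunctions: if `(-Δ + V) f = 0` and `f` has finite
support, then `f ≡ 0`. -/
theorem no_finitely_supported_solutions (d : ℕ) (hd : 0 < d)
    (V : (Fin d → ℤ) → ℝ) (f : (Fin d → ℤ) → ℂ)
    (heq : ∀ i, -discreteLaplacian d f i + (V i : ℂ) * f i = 0)
    (hfin : (Function.support f).Finite) :
    ∀ j, f j = 0 := by
  by_contra h
  push_neg at h
  obtain ⟨j0, hj0⟩ := h
  set k0 : Fin d := ⟨0, hd⟩ with hk0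
  have hS : hfin.toFinset.Nonempty := ⟨j0, by simp [hj0]⟩
  obtain ⟨i, hiS, hmax⟩ := hfin.toFinset.exists_max_image (fun p => p k0) hS
  have hi : f i ≠ 0 := by simpa using hfin.mem_toFinset.mp hiS
  have hbound : ∀ p, i k0 < p k0 → f p = 0 := by
    intro p hp
    by_contra hfp
    have := hmax p (hfin.mem_toFinset.mpr hfp)
    omega
  set j := Function.update i k0 (i k0 + 1) with hj
  have hjk0 : j k0 = i k0 + 1 := by simp [hj]
  have hfj : f j = 0 := hbound j (by omega)
  have hsum : (∑ k : Fin d,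
      (f (Function.update j k (j k + 1)) + f (Function.update j k (j k - 1)))) = 0 := by
    have h1 := heq j
    unfold discreteLaplacian at h1
    rw [hfj] at h1
    linear_combination -h1
  have hplus : ∀ k : Fin d, f (Function.update j k (j k + 1)) = 0 := by
    intro k
    apply hbound
    by_cases hk : k = k0
    · subst hk; simp [hjk0]
    · rw [Function.update_of_ne]
      · omega
      · exact Ne.symm hk
  have hminus : ∀ k : Fin d, k ≠ k0 → f (Function.update j k (j k - 1)) = 0 := by
    intro k hk
    apply hbound
    rw [Function.update_of_ne]
    · omega
    · exact Ne.symm hk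
  have hmk0 : Function.update j k0 (j k0 - 1) = i := by
    rw [hjk0, hj]
    simp [Function.update_idem]
  have : (∑ k : Fin d,
      (f (Function.update j k (j k + 1)) + f (Function.update j k (j k - 1)))) = f i := by
    rw [Finset.sum_eq_single_of_mem k0 (Finset.mem_univ _)]
    · rw [hplus k0, hmk0]; ring
    · intro k _ hk
      rw [hplus k, hminus k hk]; ring
  rw [hsum] at this
  exact hi this.symm
end

section
/- Let f : ℤ² → ℂ satisfy Δf = 0 on ℤ² (discrete Laplacian) and f ≡ 0 on the half-space {j ∈ ℤ² : ⟨j, ν⟩ ≤ α}, where ν ∈ ℝ² is a nonzero vector not parallel to (1,1) or (−1,1). Then f ≡ 0 on ℤ². -/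
/-- Discrete Laplacian on `ℤ²`. -/
noncomputable def discreteLaplacian2 (f : ℤ × ℤ → ℂ) (i : ℤ × ℤ) : ℂ :=
  f (i.1 + 1, i.2) + f (i.1 - 1, i.2) + f (i.1, i.2 + 1) + f (i.1, i.2 - 1) - 4 * f i

/-- Harmonicity is preserved by negating the first coordinate. -/
lemma harmNegFst (f : ℤ × ℤ → ℂ) (h : ∀ i, discreteLaplacian2 f i = 0) :
    ∀ i, discreteLaplacian2 (fun x => f (-x.1, x.2)) i = 0 := by
  intro i
  have H := h (-i.1, i.2)
  simp only [discreteLaplacian2] at H ⊢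
  have e1 : (-(i.1 + 1) : ℤ) = -i.1 - 1 := by ring
  have e2 : (-(i.1 - 1) : ℤ) = -i.1 + 1 := by ring
  rw [e1, e2]
  linear_combination H

/-- Harmonicity is preserved by negating the second coordinate. -/
lemma harmNegSnd (f : ℤ × ℤ → ℂ) (h : ∀ i, discreteLaplacian2 f i = 0) :
    ∀ i, discreteLaplacian2 (fun x => f (x.1, -x.2)) i = 0 := by
  intro i
  have H := h (i.1, -i.2)
  simp only [discreteLaplacian2] at H ⊢
  have e1 : (-(i.2 + 1) : ℤ) = -i.2 - 1 := by ring
  have e2 : (-(i.2 - 1) : ℤ) = -i.2 + 1 := by ring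
  rw [e1, e2]
  linear_combination H

/-- Harmonicity is preserved by swapping the coordinates. -/
lemma harmSwap (f : ℤ × ℤ → ℂ) (h : ∀ i, discreteLaplacian2 f i = 0) :
    ∀ i, discreteLaplacian2 (fun x => f (x.2, x.1)) i = 0 := by
  intro i
  have H := h (i.2, i.1)
  simp only [discreteLaplacian2] at H ⊢
  linear_combination H

/-- Main propagation lemma: if `|b| < a` and a harmonic function vanishes on
`{j : j.1 * a + j.2 * b ≤ α}`, it vanishes everywhere. -/
lemma uc_main (f : ℤ × ℤ → ℂ) (hharm : ∀ i, discreteLaplacian2 f i = 0)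
    (a b α : ℝ) (hab : |b| < a)
    (hvan : ∀ j : ℤ × ℤ, (j.1 : ℝ) * a + (j.2 : ℝ) * b ≤ α → f j = 0) :
    ∀ j, f j = 0 := by
  set δ := a - |b| with hδ
  have habs : (0:ℝ) ≤ |b| := abs_nonneg b
  have hb1 : b ≤ |b| := le_abs_self b
  have hb2 : -b ≤ |b| := neg_le_abs b
  have hδpos : 0 < δ := by simp only [hδ, sub_pos]; exact hab
  have key : ∀ n : ℕ, ∀ j : ℤ × ℤ,
      (j.1 : ℝ) * a + (j.2 : ℝ) * b ≤ α + n * δ → f j = 0 := by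
    intro n
    induction n with
    | zero => simpa using hvan
    | succ n ih =>
      rintro ⟨x, y⟩ hj
      simp only at hj
      have e : α + ((n:ℝ) + 1) * δ = α + (n:ℝ) * δ + δ := by ring
      push_cast at hj
      rw [e] at hj
      have h0 : f (x - 1, y) = 0 := by
        apply ih; push_cast; simp only [hδ] at hj ⊢; linarith
      have h1 : f (x - 1 - 1, y) = 0 := by
        apply ih; push_cast; simp only [hδ] at hj ⊢; linarith
      have h2 : f (x - 1, y + 1) = 0 := by
        apply ih; push_cast; simp only [hδ] at hj ⊢; linarith
      have h3 : f (x - 1, y - 1) = 0 := by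
        apply ih; push_cast; simp only [hδ] at hj ⊢; linarith
      have H := hharm (x - 1, y)
      simp only [discreteLaplacian2] at H
      have ex : (x - 1 + 1 : ℤ) = x := by ring
      rw [ex] at H
      show f (x, y) = 0
      linear_combination H - h1 - h2 - h3 + 4 * h0
  intro j
  obtain ⟨n, hn⟩ := exists_nat_ge (((j.1 : ℝ) * a + (j.2 : ℝ) * b - α) / δ)
  apply key n
  have := (div_le_iff₀ hδpos).mp hn
  linarith

/-- Unique continuation in `ℤ²` from half spaces `{j : ⟨j, ν⟩ ≤ α}` whose border is
not in a 45° angle to the axes, i.e. `ν` is not parallel to `(1,1)` or `(-1,1)`. -/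
theorem uc_from_half_space_generic_direction
    (f : ℤ × ℤ → ℂ) (hharm : ∀ i, discreteLaplacian2 f i = 0)
    (ν : ℝ × ℝ) (α : ℝ) (hν : ν ≠ 0)
    (hdiag : ¬ ∃ t : ℝ, ν = (t, t)) (hantidiag : ¬ ∃ t : ℝ, ν = (-t, t))
    (hvan : ∀ j : ℤ × ℤ, (j.1 : ℝ) * ν.1 + (j.2 : ℝ) * ν.2 ≤ α → f j = 0) :
    ∀ j, f j = 0 := by
  have habsne : |ν.2| ≠ |ν.1| := by
    intro h
    rcases abs_eq_abs.mp h with h | h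
    · exact hdiag ⟨ν.1, by simp [Prod.ext_iff, h]⟩
    · exact hantidiag ⟨ν.2, by rw [Prod.ext_iff]; constructor <;> simp <;> linarith⟩
  rcases habsne.lt_or_gt with h | h
  · -- |ν.2| < |ν.1|
    have h1 : ν.1 ≠ 0 := by
      intro h0; rw [h0, abs_zero] at h; exact absurd h (abs_nonneg _).not_gt
    rcases h1.lt_or_gt with hneg | hpos
    · -- ν.1 < 0 : reflect in first coordinate
      have hg := harmNegFst f hharm
      have key := uc_main _ hg (-ν.1) ν.2 α
        (by rwa [abs_of_neg hneg] at h)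
        (by
          rintro ⟨x, y⟩ hj
          simp only at hj ⊢
          apply hvan (-x, y)
          push_cast
          linarith)
      intro j
      have := key (-j.1, j.2)
      simpa using this
    · -- 0 < ν.1 : direct
      exact uc_main f hharm ν.1 ν.2 α (by rwa [abs_of_pos hpos] at h) hvan
  · -- |ν.1| < |ν.2|
    have h2 : ν.2 ≠ 0 := by
      intro h0; rw [h0, abs_zero] at h; exact absurd h (abs_nonneg _).not_gt
    rcases h2.lt_or_gt with hneg | hpos
    · -- ν.2 < 0 : use g x = f (x.2, -x.1)
      have hg1 := harmNegSnd f hharm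
      have hg := harmSwap _ hg1
      have key := uc_main _ hg (-ν.2) ν.1 α
        (by rwa [abs_of_neg hneg] at h)
        (by
          rintro ⟨x, y⟩ hj
          simp only at hj ⊢
          apply hvan (y, -x)
          push_cast
          linarith)
      intro j
      have := key (-j.2, j.1)
      simpa using this
    · -- 0 < ν.2 : swap coordinates
      have hg := harmSwap f hharm
      have key := uc_main _ hg ν.2 ν.1 α
        (by rwa [abs_of_pos hpos] at h)
        (by
          rintro ⟨x, y⟩ hj
          simp only at hj ⊢
          apply hvan (y, x)
          push_cast
          linarith)
      intro j
      have := key (j.2, j.1)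
      simpa using this
end

section
/- There exists a nonzero function f : ℤ² → ℂ with Δf = 0 on ℤ² (discrete Laplacian) such that f(j) = 0 for all j = (j₁, j₂) with j₁ + j₂ ≤ 0. Hence unique continuation from the diagonal half-space fails for discrete harmonic functions on ℤ². -/
/-- Discrete antiderivative on `ℤ`. -/
noncomputable def intSum (d : ℤ → ℂ) (k : ℤ) : ℂ :=
  (∑ j ∈ Finset.Ico (0 : ℤ) k, d j) - ∑ j ∈ Finset.Ico k (0 : ℤ), d j

lemma intSum_succ (d : ℤ → ℂ) (k : ℤ) : intSum d (k + 1) = intSum d k + d k := by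
  unfold intSum
  rcases le_or_gt 0 k with h | h
  · have hins : Finset.Ico (0 : ℤ) (k + 1) = insert k (Finset.Ico (0 : ℤ) k) := by
      ext j; simp; omega
    rw [hins, Finset.sum_insert (by simp)]
    rw [Finset.Ico_eq_empty (by omega : ¬ (k : ℤ) < 0),
        Finset.Ico_eq_empty (by omega : ¬ (k + 1 : ℤ) < 0)]
    simp
    ring
  · have hins : Finset.Ico k (0 : ℤ) = insert k (Finset.Ico (k + 1) (0 : ℤ)) := by
      ext j; simp; omega
    rw [hins, Finset.sum_insert (by simp)]
    rw [Finset.Ico_eq_empty (by omega : ¬ (0 : ℤ) < k),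
        Finset.Ico_eq_empty (by omega : ¬ (0 : ℤ) < k + 1)]
    simp only [Finset.sum_empty, sub_zero, zero_sub]
    ring

/-- Solve `g k + g (k+1) = c k` on `ℤ`. -/
noncomputable def solveAlt (c : ℤ → ℂ) (k : ℤ) : ℂ :=
  (-1 : ℂ) ^ k * intSum (fun j => -((-1 : ℂ) ^ j) * c j) k

lemma neg_one_zpow_mul_self (k : ℤ) : (-1 : ℂ) ^ k * (-1 : ℂ) ^ k = 1 := by
  rw [← zpow_add₀ (by norm_num : (-1 : ℂ) ≠ 0)]
  have : k + k = 2 * k := by ring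
  rw [this, zpow_mul]
  norm_num

lemma solveAlt_add (c : ℤ → ℂ) (k : ℤ) : solveAlt c k + solveAlt c (k + 1) = c k := by
  unfold solveAlt
  rw [intSum_succ]
  have h1 : (-1 : ℂ) ^ (k + 1) = (-1 : ℂ) ^ k * (-1) := by
    rw [zpow_add₀ (by norm_num : (-1 : ℂ) ≠ 0)]; norm_num
  rw [h1]
  have h2 := neg_one_zpow_mul_self k
  linear_combination c k * h2

/-- Values on the diagonal `x + y = n`, as a function of the first coordinate. -/
noncomputable def diagF : ℕ → ℤ → ℂ
  | 0 => fun _ => 0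
  | 1 => fun k => (-1 : ℂ) ^ k
  | (n + 2) => solveAlt (fun k => 4 * diagF (n + 1) k - diagF n k - diagF n (k - 1))

lemma diagF_rec (n : ℕ) (x : ℤ) :
    diagF (n + 2) x + diagF (n + 2) (x + 1) =
      4 * diagF (n + 1) x - diagF n x - diagF n (x - 1) := by
  show solveAlt _ x + solveAlt _ (x + 1) = _
  exact solveAlt_add _ x

noncomputable def funF : ℤ × ℤ → ℂ := fun i => diagF (i.1 + i.2).toNat i.1

/-- Unique continuation from the diagonal half space `{j : j₁ + j₂ ≤ 0}` fails on `ℤ²`: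
there exists a nonzero discrete harmonic function vanishing on that half space. -/
theorem no_uc_from_diagonal_half_space :
    ∃ f : ℤ × ℤ → ℂ, f ≠ 0 ∧ (∀ i, discreteLaplacian2 f i = 0) ∧
      ∀ j : ℤ × ℤ, j.1 + j.2 ≤ 0 → f j = 0 := by
  refine ⟨funF, ?_, ?_, ?_⟩
  · intro h
    have h01 : funF (0, 1) = 0 := by rw [h]; rfl
    simp [funF, diagF] at h01
  · rintro ⟨x, y⟩
    unfold discreteLaplacian2 funF
    simp only
    rcases lt_trichotomy (x + y) 0 with h | h | h
    · have e1 : (x + 1 + y).toNat = 0 ∨ (x + 1 + y).toNat = 1 := by omega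
      have e2 : (x - 1 + y).toNat = 0 := by omega
      have e3 : (x + (y + 1)).toNat = 0 ∨ (x + (y + 1)).toNat = 1 := by omega
      have e4 : (x + (y - 1)).toNat = 0 := by omega
      have e5 : (x + y).toNat = 0 := by omega
      rcases le_or_gt (x + y) (-1) with h' | h'
      · have e1' : (x + 1 + y).toNat = 0 := by omega
        have e3' : (x + (y + 1)).toNat = 0 := by omega
        rw [e1', e2, e3', e4, e5]
        simp [diagF]
      · have hxy : x + y = 0 := by omega
        have e1' : (x + 1 + y).toNat = 1 := by omega
        have e3' : (x + (y + 1)).toNat = 1 := by omega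
        rw [e1', e2, e3', e4, e5]
        show (-1 : ℂ) ^ (x + 1) + 0 + (-1 : ℂ) ^ x + 0 - 4 * 0 = 0
        rw [zpow_add₀ (by norm_num : (-1 : ℂ) ≠ 0)]
        ring
    · -- x + y = 0 handled above? no, trichotomy: h : x + y = 0
      have e1 : (x + 1 + y).toNat = 1 := by omega
      have e2 : (x - 1 + y).toNat = 0 := by omega
      have e3 : (x + (y + 1)).toNat = 1 := by omega
      have e4 : (x + (y - 1)).toNat = 0 := by omega
      have e5 : (x + y).toNat = 0 := by omega
      rw [e1, e2, e3, e4, e5]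
      show (-1 : ℂ) ^ (x + 1) + 0 + (-1 : ℂ) ^ x + 0 - 4 * 0 = 0
      rw [zpow_add₀ (by norm_num : (-1 : ℂ) ≠ 0)]
      ring
    · obtain ⟨m, hm⟩ : ∃ m : ℕ, (x + y).toNat = m + 1 := ⟨(x + y - 1).toNat, by omega⟩
      have e1 : (x + 1 + y).toNat = m + 2 := by omega
      have e2 : (x - 1 + y).toNat = m := by omega
      have e3 : (x + (y + 1)).toNat = m + 2 := by omega
      have e4 : (x + (y - 1)).toNat = m := by omega
      rw [e1, e2, e3, e4, hm]
      have := diagF_rec m x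
      linear_combination this
  · rintro ⟨a, b⟩ h
    have : (a + b).toNat = 0 := by omega
    simp only [funF, this]
    rfl
end

section
/- Let f : ℤ² → ℂ satisfy Δf = 0 on ℤ². Suppose f vanishes on the quadrant Q_{c₁,c₂} = {j ∈ ℤ² : j₁ ≤ c₁ and j₂ ≤ c₂} for some c₁, c₂ ∈ ℤ. Then f vanishes on the entire anti-diagonal line {j ∈ ℤ² : j₁ + j₂ = c₁ + c₂}. -/
/-- Extend vanishing on a quadrant one column to the right (shrinking one row). -/
lemma quadrant_step_right (f : ℤ × ℤ → ℂ) (hharm : ∀ i, discreteLaplacian2 f i = 0)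
    (a b : ℤ) (h : ∀ j : ℤ × ℤ, j.1 ≤ a → j.2 ≤ b → f j = 0) :
    ∀ j : ℤ × ℤ, j.1 ≤ a + 1 → j.2 ≤ b - 1 → f j = 0 := by
  intro j hj1 hj2
  rcases le_or_gt j.1 a with h1 | h1
  · exact h j h1 (by omega)
  · have hj1' : j.1 = a + 1 := by omega
    have hL := hharm (a, j.2)
    simp only [discreteLaplacian2] at hL
    have e1 : f (a - 1, j.2) = 0 := h _ (by omega) (by simpa using by omega)
    have e2 : f (a, j.2 + 1) = 0 := h _ (by omega) (by simpa using by omega)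
    have e3 : f (a, j.2 - 1) = 0 := h _ (by omega) (by simpa using by omega)
    have e4 : f (a, j.2) = 0 := h _ (by omega) (by simpa using by omega)
    rw [e1, e2, e3, e4] at hL
    have : f (a + 1, j.2) = 0 := by linear_combination hL
    have hjeq : j = (a + 1, j.2) := by
      ext <;> simp [hj1']
    rw [hjeq]; exact this

/-- Extend vanishing on a quadrant one row up (shrinking one column). -/
lemma quadrant_step_up (f : ℤ × ℤ → ℂ) (hharm : ∀ i, discreteLaplacian2 f i = 0)
    (a b : ℤ) (h : ∀ j : ℤ × ℤ, j.1 ≤ a → j.2 ≤ b → f j = 0) :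
    ∀ j : ℤ × ℤ, j.1 ≤ a - 1 → j.2 ≤ b + 1 → f j = 0 := by
  intro j hj1 hj2
  rcases le_or_gt j.2 b with h2 | h2
  · exact h j (by omega) h2
  · have hj2' : j.2 = b + 1 := by omega
    have hL := hharm (j.1, b)
    simp only [discreteLaplacian2] at hL
    have e1 : f (j.1 + 1, b) = 0 := h _ (by simpa using by omega) (by omega)
    have e2 : f (j.1 - 1, b) = 0 := h _ (by simpa using by omega) (by omega)
    have e3 : f (j.1, b - 1) = 0 := h _ (by simpa using by omega) (by omega)
    have e4 : f (j.1, b) = 0 := h _ (by simpa using by omega) (by omega)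
    rw [e1, e2, e3, e4] at hL
    have : f (j.1, b + 1) = 0 := by linear_combination hL
    have hjeq : j = (j.1, b + 1) := by ext <;> simp [hj2']
    rw [hjeq]; exact this

/-- If a discrete harmonic function on `ℤ²` vanishes on the quadrant
`Q_{c₁,c₂} = {j : j₁ ≤ c₁, j₂ ≤ c₂}`, then it vanishes on the whole anti-diagonal
line `{j : j₁ + j₂ = c₁ + c₂}`. -/
theorem vanish_on_quadrant_implies_vanish_on_antidiagonal
    (f : ℤ × ℤ → ℂ) (hharm : ∀ i, discreteLaplacian2 f i = 0)
    (c₁ c₂ : ℤ)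
    (hvan : ∀ j : ℤ × ℤ, j.1 ≤ c₁ → j.2 ≤ c₂ → f j = 0) :
    ∀ j : ℤ × ℤ, j.1 + j.2 = c₁ + c₂ → f j = 0 := by
  have P : ∀ n : ℕ, ∀ j : ℤ × ℤ, j.1 ≤ c₁ + n → j.2 ≤ c₂ - n → f j = 0 := by
    intro n
    induction n with
    | zero => simpa using hvan
    | succ k ih =>
      have := quadrant_step_right f hharm (c₁ + k) (c₂ - k) ih
      intro j hj1 hj2
      exact this j (by push_cast at hj1 ⊢; omega) (by push_cast at hj2 ⊢; omega)
  have Q : ∀ n : ℕ, ∀ j : ℤ × ℤ, j.1 ≤ c₁ - n → j.2 ≤ c₂ + n → f j = 0 := by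
    intro n
    induction n with
    | zero => simpa using hvan
    | succ k ih =>
      have := quadrant_step_up f hharm (c₁ - k) (c₂ + k) ih
      intro j hj1 hj2
      exact this j (by push_cast at hj1 ⊢; omega) (by push_cast at hj2 ⊢; omega)
  intro j hj
  rcases le_or_gt c₁ j.1 with h1 | h1
  · refine P (j.1 - c₁).toNat j ?_ ?_ <;> omega
  · refine Q (c₁ - j.1).toNat j ?_ ?_ <;> omega
end

section
/- For the discrete Laplacian on ℤ², if a function f : ℤ² → ℂ satisfies Δf = 0, vanishes on the diagonal half-space {j : j₁ + j₂ ≤ 0}, and additionally vanishes at one point of the anti-diagonal {j : j₁ + j₂ = 1}, then f vanishes on the entire anti-diagonal {j : j₁ + j₂ = 1}. -/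
/-- If a discrete harmonic function on `ℤ²` vanishes on the diagonal half space
`{j : j₁ + j₂ ≤ 0}` and at one point of the anti-diagonal `{j : j₁ + j₂ = 1}`,
then it vanishes on the entire anti-diagonal `{j : j₁ + j₂ = 1}`. -/
theorem vanish_on_antidiagonal_of_one_point
    (f : ℤ × ℤ → ℂ) (hharm : ∀ i, discreteLaplacian2 f i = 0)
    (hvan : ∀ j : ℤ × ℤ, j.1 + j.2 ≤ 0 → f j = 0)
    (p : ℤ × ℤ) (hp : p.1 + p.2 = 1) (hfp : f p = 0) :
    ∀ j : ℤ × ℤ, j.1 + j.2 = 1 → f j = 0 := by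
  have key : ∀ k : ℤ, f (k + 1, 1 - (k + 1)) = - f (k, 1 - k) := by
    intro k
    have h := hharm (k, -k)
    simp only [discreteLaplacian2] at h
    have h1 : f (k - 1, -k) = 0 := hvan _ (by simp)
    have h2 : f (k, -k - 1) = 0 := hvan _ (by simp; omega)
    have h3 : f (k, -k) = 0 := hvan _ (by simp)
    have e1 : (1 : ℤ) - (k + 1) = -k := by ring
    have e2 : -k + 1 = 1 - k := by ring
    rw [h1, h2, h3, e2] at h
    rw [e1]
    linear_combination h
  have hg : ∀ m : ℤ, f (p.1 + m, 1 - (p.1 + m)) = 0 := by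
    intro m
    induction m using Int.induction_on with
    | zero => simpa [show (1:ℤ) - p.1 = p.2 by omega] using hfp
    | succ n ih =>
      have := key (p.1 + n)
      push_cast at this ⊢
      rw [show p.1 + (n + 1) = p.1 + n + 1 by ring, this, ih, neg_zero]
    | pred n ih =>
      have h := key (p.1 - ((n : ℤ) + 1))
      rw [show p.1 - ((n : ℤ) + 1) + 1 = p.1 + -(n : ℤ) by ring] at h
      have h1 : f (p.1 + -(n : ℤ), 1 - (p.1 + -(n : ℤ))) = 0 := by exact_mod_cast ih
      have h0 : f (p.1 - ((n : ℤ) + 1), 1 - (p.1 - ((n : ℤ) + 1))) = 0 :=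
        neg_eq_zero.mp (h.symm.trans h1)
      rw [show p.1 + (-(n : ℤ) - 1) = p.1 - ((n : ℤ) + 1) from by ring]
      exact h0
  intro j hj
  have := hg (j.1 - p.1)
  rw [show p.1 + (j.1 - p.1) = j.1 by ring, show (1:ℤ) - j.1 = j.2 by omega] at this
  simpa using this
end

section
/- For the discrete Laplacian on ℤ^d and any potential V : ℤ^d → ℝ, the dimension of the eigenspace of the restriction (−Δ + V)|_{Λ_L} (simple boundary conditions) to any eigenvalue E is at most |∂₍₂₎Λ_L|, the number of sites in Λ_L within distance 2 of the complement. Consequently this dimension is at most C·L^{d−1} for a constant C depending only on d. -/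
/-- The box `Λ_L = {0, …, L-1}^d`. -/
def latticeBox (d : ℕ) (L : ℕ) : Set (Fin d → ℤ) :=
  {i | ∀ k, 0 ≤ i k ∧ i k < L}

/-- The boundary layer `∂₍₂₎Λ_L`: sites of `Λ_L` within distance 2 of the complement. -/
def boundaryLayer (d : ℕ) (L : ℕ) : Set (Fin d → ℤ) :=
  {i | i ∈ latticeBox d L ∧ ∃ k, i k ≤ 1 ∨ (L : ℤ) - 2 ≤ i k}

lemma lap_add (d : ℕ) (f g : (Fin d → ℤ) → ℂ) (i : Fin d → ℤ) :
    discreteLaplacian d (f + g) i = discreteLaplacian d f i + discreteLaplacian d g i := by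
  simp only [discreteLaplacian, Pi.add_apply, Finset.sum_add_distrib]
  ring

lemma lap_smul (d : ℕ) (c : ℂ) (f : (Fin d → ℤ) → ℂ) (i : Fin d → ℤ) :
    discreteLaplacian d (c • f) i = c * discreteLaplacian d f i := by
  unfold discreteLaplacian
  simp only [Pi.smul_apply, smul_eq_mul]
  rw [mul_sub, Finset.mul_sum]
  congr 1
  · exact Finset.sum_congr rfl fun k _ => by ring
  · ring

/-- The eigen-subspace as a submodule. -/
noncomputable def eigSpace (d L : ℕ) (V : (Fin d → ℤ) → ℝ) (E : ℂ) : Submodule ℂ ((Fin d → ℤ) → ℂ) where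
  carrier := {f | (∀ i ∉ latticeBox d L, f i = 0) ∧
    ∀ i ∈ latticeBox d L, -discreteLaplacian d f i + (V i : ℂ) * f i = E * f i}
  add_mem' := by
    rintro f g ⟨hf0, hfe⟩ ⟨hg0, hge⟩
    refine ⟨fun i hi => by simp [hf0 i hi, hg0 i hi], fun i hi => ?_⟩
    have h1 := hfe i hi
    have h2 := hge i hi
    simp only [Pi.add_apply, lap_add]
    ring_nf
    ring_nf at h1 h2
    linear_combination h1 + h2
  zero_mem' := by
    refine ⟨fun i _ => rfl, fun i _ => ?_⟩
    simp [discreteLaplacian]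
  smul_mem' := by
    rintro c f ⟨hf0, hfe⟩
    refine ⟨fun i hi => by simp [hf0 i hi], fun i hi => ?_⟩
    have h1 := hfe i hi
    simp only [Pi.smul_apply, smul_eq_mul, lap_smul]
    linear_combination c * h1

lemma vanish (d L : ℕ) (hd : 0 < d) (V : (Fin d → ℤ) → ℝ) (E : ℂ)
    (f : (Fin d → ℤ) → ℂ)
    (h0 : ∀ i ∉ latticeBox d L, f i = 0)
    (heq : ∀ i ∈ latticeBox d L, -discreteLaplacian d f i + (V i : ℂ) * f i = E * f i)
    (hb : ∀ i ∈ boundaryLayer d L, f i = 0) : f = 0 := by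
  classical
  set k0 : Fin d := ⟨0, hd⟩ with hk0
  have claim : ∀ t : ℕ, ∀ i : Fin d → ℤ, i k0 ≤ (t : ℤ) + 1 → f i = 0 := by
    intro t
    induction t with
    | zero =>
      intro i hi
      by_cases hib : i ∈ latticeBox d L
      · exact hb i ⟨hib, k0, Or.inl (by exact_mod_cast hi)⟩
      · exact h0 i hib
    | succ t ih =>
      intro i hi
      by_cases hib : i ∈ latticeBox d L
      · by_cases hle : i k0 ≤ (t : ℤ) + 1
        · exact ih i hle
        · have hik : i k0 = (t : ℤ) + 2 := by push_cast at hi ⊢; omega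
          set j := Function.update i k0 ((t : ℤ) + 1) with hj
          have hjk0 : j k0 = (t : ℤ) + 1 := by simp [hj]
          have hjb : j ∈ latticeBox d L := by
            intro k
            by_cases hk : k = k0
            · subst hk
              rw [hjk0]
              have h1 := (hib k0).2
              constructor <;> omega
            · rw [hj, Function.update_of_ne hk]
              exact hib k
          have hfj : f j = 0 := ih j (le_of_eq hjk0)
          have heqj := heq j hjb
          rw [hfj] at heqj
          have hΔ : discreteLaplacian d f j = 0 := by
            have h' : -discreteLaplacian d f j = 0 := by linear_combination heqj
            exact neg_eq_zero.mp h'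
          have hsum : ∑ k : Fin d,
              (f (Function.update j k (j k + 1)) + f (Function.update j k (j k - 1))) = 0 := by
            have := hΔ
            unfold discreteLaplacian at this
            rw [hfj] at this
            simpa using this
          have hsum' : ∑ k : Fin d,
              (f (Function.update j k (j k + 1)) + f (Function.update j k (j k - 1))) = f i := by
            rw [Finset.sum_eq_single k0]
            · have h1 : Function.update j k0 (j k0 + 1) = i := by
                funext k
                by_cases hk : k = k0
                · subst hk; rw [Function.update_self, hjk0, hik]; ring
                · rw [Function.update_of_ne hk, hj, Function.update_of_ne hk]
              have h2 : f (Function.update j k0 (j k0 - 1)) = 0 := by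
                apply ih
                rw [Function.update_self, hjk0]
                omega
              rw [h1, h2, add_zero]
            · intro k _ hk
              have hne : k0 ≠ k := fun h => hk h.symm
              have ha : f (Function.update j k (j k + 1)) = 0 := by
                apply ih
                rw [Function.update_of_ne hne, hjk0]
              have hb' : f (Function.update j k (j k - 1)) = 0 := by
                apply ih
                rw [Function.update_of_ne hne, hjk0]
              rw [ha, hb', add_zero]
            · intro h
              exact absurd (Finset.mem_univ k0) h
          rw [hsum] at hsum'
          exact hsum'.symm
      · exact h0 i hib
  funext i
  by_cases hib : i ∈ latticeBox d L
  · exact claim L i (by have := (hib k0).2; omega)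
  · exact h0 i hib

lemma boundary_card (d L : ℕ) (hd : 0 < d) :
    (boundaryLayer d L).ncard ≤ (4 * d) * L ^ (d - 1) := by
  classical
  set T : Finset ℤ := {0, 1, (L : ℤ) - 2, (L : ℤ) - 1} with hT
  set PF : Fin d → Finset (Fin d → ℤ) :=
    fun k => Fintype.piFinset (fun k' => if k' = k then T else Finset.Ico (0 : ℤ) L) with hPF
  have hsub : boundaryLayer d L ⊆ ↑(Finset.univ.biUnion PF) := by
    rintro i ⟨hbox, k, hk⟩
    simp only [Finset.coe_biUnion, Finset.coe_univ, Set.mem_univ, Set.iUnion_true,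
      Set.mem_iUnion, Finset.mem_coe]
    refine ⟨k, ?_⟩
    rw [hPF, Fintype.mem_piFinset]
    intro k'
    by_cases hk' : k' = k
    · subst hk'
      have h1 := hbox k'
      rw [if_pos rfl, hT]
      simp only [Finset.mem_insert, Finset.mem_singleton]
      omega
    · rw [if_neg hk', Finset.mem_Ico]
      exact hbox k'
  have hTcard : T.card ≤ 4 := by
    have h1 := Finset.card_insert_le (0 : ℤ) ({1, (L : ℤ) - 2, (L : ℤ) - 1} : Finset ℤ)
    have h2 := Finset.card_insert_le (1 : ℤ) ({(L : ℤ) - 2, (L : ℤ) - 1} : Finset ℤ)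
    have h3 := Finset.card_insert_le ((L : ℤ) - 2) ({(L : ℤ) - 1} : Finset ℤ)
    simp only [Finset.card_singleton] at h3
    rw [hT]
    omega
  have hPFcard : ∀ k, (PF k).card ≤ 4 * L ^ (d - 1) := by
    intro k
    rw [hPF]
    rw [Fintype.card_piFinset]
    rw [← Finset.mul_prod_erase Finset.univ _ (Finset.mem_univ k)]
    have h1 : ∀ k' ∈ Finset.univ.erase k,
        (if k' = k then T else Finset.Ico (0 : ℤ) L).card = L := by
      intro k' hk'
      rw [if_neg (Finset.ne_of_mem_erase hk'), Int.card_Ico]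
      simp
    rw [Finset.prod_congr rfl h1, Finset.prod_const, if_pos rfl,
      Finset.card_erase_of_mem (Finset.mem_univ k), Finset.card_univ, Fintype.card_fin]
    exact Nat.mul_le_mul hTcard le_rfl
  calc (boundaryLayer d L).ncard ≤ (Finset.univ.biUnion PF).card := by
        rw [← Set.ncard_coe_finset]
        exact Set.ncard_le_ncard hsub (Finset.finite_toSet _)
    _ ≤ ∑ k : Fin d, (PF k).card := Finset.card_biUnion_le
    _ ≤ ∑ _k : Fin d, 4 * L ^ (d - 1) := Finset.sum_le_sum (fun k _ => hPFcard k)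
    _ = (4 * d) * L ^ (d - 1) := by
        rw [Finset.sum_const, Finset.card_univ, Fintype.card_fin, smul_eq_mul]
        ring

/-- The dimension of any eigenspace of `(-Δ + V)|_{Λ_L}` (simple boundary
conditions) is at most `|∂₍₂₎Λ_L|`, hence at most `C · L^(d-1)` with `C = C(d)`:
any linearly independent family of eigenfunctions to a common eigenvalue `E` has
at most that many members. -/
theorem eigenspace_dimension_bound (d : ℕ) (hd : 0 < d) :
    ∃ C : ℕ, ∀ (L : ℕ) (V : (Fin d → ℤ) → ℝ) (E : ℂ)
      (n : ℕ) (F : Fin n → (Fin d → ℤ) → ℂ),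
      (∀ m, (∀ i ∉ latticeBox d L, F m i = 0) ∧
        ∀ i ∈ latticeBox d L,
          -discreteLaplacian d (F m) i + (V i : ℂ) * F m i = E * F m i) →
      LinearIndependent ℂ F →
      n ≤ (boundaryLayer d L).ncard ∧ n ≤ C * L ^ (d - 1) := by
  classical
  refine ⟨4 * d, fun L V E n F hF hLI => ?_⟩
  have hbox_fin : (latticeBox d L).Finite := by
    apply Set.Finite.subset
      (Finset.finite_toSet (Fintype.piFinset fun _ : Fin d => Finset.Ico (0 : ℤ) L))
    intro i hi
    simp only [Finset.coe_sort_coe, Finset.mem_coe, Fintype.mem_piFinset, Finset.mem_Ico]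
    exact hi
  have hS_fin : (boundaryLayer d L).Finite := hbox_fin.subset (fun i hi => hi.1)
  haveI := hS_fin.fintype
  let Φ : ((Fin d → ℤ) → ℂ) →ₗ[ℂ] ((boundaryLayer d L) → ℂ) :=
    LinearMap.funLeft ℂ ℂ Subtype.val
  have hspan : Submodule.span ℂ (Set.range F) ≤ eigSpace d L V E := by
    rw [Submodule.span_le]
    rintro _ ⟨m, rfl⟩
    exact hF m
  have hdisj : Disjoint (Submodule.span ℂ (Set.range F)) (LinearMap.ker Φ) := by
    rw [Submodule.disjoint_def]
    intro g hg hker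
    have hgP := hspan hg
    apply vanish d L hd V E g hgP.1 hgP.2
    intro i hi
    have := congrFun (LinearMap.mem_ker.mp hker) ⟨i, hi⟩
    simpa [Φ, LinearMap.funLeft] using this
  have hLI2 : LinearIndependent ℂ (Φ ∘ F) := hLI.map hdisj
  have hcard : n ≤ (boundaryLayer d L).ncard := by
    have h := hLI2.fintype_card_le_finrank
    rw [Module.finrank_fintype_fun_eq_card, Fintype.card_fin] at h
    rwa [Set.ncard_eq_toFinset_card', Set.toFinset_card]
  exact ⟨hcard, hcard.trans (boundary_card d L hd)⟩
end

section
/- Fix n ∈ ℕ. There exists an n-dimensional space of functions f : ℤ² → ℂ satisfying Δf = 0 on ℤ² and vanishing on the set {j ∈ ℤ² : j₁ ∈ {0, 1}} \ P, where P is a set of n distinct points in the double strip {j : j₁ ∈ {0,1}}: each assignment of values on P extends uniquely to a discrete harmonic function on ℤ² vanishing on the double strip outside P. -/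
/-- Columns of the harmonic extension: column 0 is `a`, column 1 is `b`, and
subsequent columns are determined by the harmonicity recursion. -/
def colSeq (a b : ℤ → ℂ) : ℕ → ℤ → ℂ
  | 0 => a
  | 1 => b
  | (k+2) => fun y => 4 * colSeq a b (k+1) y - colSeq a b k y
      - colSeq a b (k+1) (y+1) - colSeq a b (k+1) (y-1)

/-- The harmonic extension of the data `a` (column 0) and `b` (column 1). -/
def extHarm (a b : ℤ → ℂ) (j : ℤ × ℤ) : ℂ :=
  if 0 ≤ j.1 then colSeq a b j.1.toNat j.2 else colSeq b a (1 - j.1).toNat j.2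

lemma extHarm_pos (a b : ℤ → ℂ) (x y : ℤ) (hx : 0 ≤ x) :
    extHarm a b (x, y) = colSeq a b x.toNat y := by
  simp [extHarm, hx]

lemma extHarm_neg (a b : ℤ → ℂ) (x y : ℤ) (hx : x ≤ 1) :
    extHarm a b (x, y) = colSeq b a (1 - x).toNat y := by
  by_cases h : 0 ≤ x
  · interval_cases x
    · rw [extHarm_pos a b 0 y le_rfl]; norm_num [colSeq]
    · rw [extHarm_pos a b 1 y (by norm_num)]; norm_num [colSeq]
  · simp [extHarm, h]

lemma extHarm_harmonic (a b : ℤ → ℂ) (i : ℤ × ℤ) :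
    discreteLaplacian2 (extHarm a b) i = 0 := by
  obtain ⟨x, y⟩ := i
  simp only [discreteLaplacian2]
  by_cases h1 : 1 ≤ x
  · set k := (x - 1).toNat with hk
    have e1 : extHarm a b (x + 1, y) = colSeq a b (k+2) y := by
      rw [extHarm_pos a b _ y (by omega)]; all_goals (congr 1 <;> omega)
    have e2 : extHarm a b (x - 1, y) = colSeq a b k y := by
      rw [extHarm_pos a b _ y (by omega)]; all_goals (congr 1 <;> omega)
    have e3 : ∀ z, extHarm a b (x, z) = colSeq a b (k+1) z := by
      intro z; rw [extHarm_pos a b _ z (by omega)]; all_goals (congr 1 <;> omega)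
    rw [e1, e2, e3, e3, e3]
    simp only [colSeq]; ring
  · set k := (-x).toNat with hk
    have e1 : extHarm a b (x + 1, y) = colSeq b a k y := by
      rw [extHarm_neg a b _ y (by omega)]; all_goals (congr 1 <;> omega)
    have e2 : extHarm a b (x - 1, y) = colSeq b a (k+2) y := by
      rw [extHarm_neg a b _ y (by omega)]; all_goals (congr 1 <;> omega)
    have e3 : ∀ z, extHarm a b (x, z) = colSeq b a (k+1) z := by
      intro z; rw [extHarm_neg a b _ z (by omega)]; all_goals (congr 1 <;> omega)
    rw [e1, e2, e3, e3, e3]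
    simp only [colSeq]; ring

lemma eq_extHarm (a b : ℤ → ℂ) (f : ℤ × ℤ → ℂ)
    (hf : ∀ i, discreteLaplacian2 f i = 0)
    (ha : ∀ y, f (0, y) = a y) (hb : ∀ y, f (1, y) = b y) :
    f = extHarm a b := by
  have key : ∀ k : ℕ, (∀ y, f ((k : ℤ), y) = colSeq a b k y) ∧
      (∀ y, f ((k : ℤ) + 1, y) = colSeq a b (k+1) y) := by
    intro k
    induction k with
    | zero =>
      constructor
      · intro y; simpa [colSeq] using ha y
      · intro y; simpa [colSeq] using hb y
    | succ k ih =>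
      refine ⟨?_, ?_⟩
      · intro y
        rw [show ((k+1 : ℕ) : ℤ) = (k : ℤ) + 1 by push_cast; ring]
        exact ih.2 y
      intro y
      have h := hf ((k : ℤ) + 1, y)
      simp only [discreteLaplacian2] at h
      have e2 : (k : ℤ) + 1 - 1 = (k : ℤ) := by ring
      rw [e2, ih.1 y, ih.2 y, ih.2 (y+1), ih.2 (y-1)] at h
      have : f ((k : ℤ) + 1 + 1, y) = 4 * colSeq a b (k+1) y - colSeq a b k y
          - colSeq a b (k+1) (y+1) - colSeq a b (k+1) (y-1) := by
        linear_combination h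
      rw [show ((k+1 : ℕ) : ℤ) + 1 = (k : ℤ) + 1 + 1 by push_cast; ring, this]
      simp only [colSeq]
  have key2 : ∀ k : ℕ, (∀ y, f (1 - (k : ℤ), y) = colSeq b a k y) ∧
      (∀ y, f (1 - ((k : ℤ) + 1), y) = colSeq b a (k+1) y) := by
    intro k
    induction k with
    | zero =>
      constructor
      · intro y; simpa [colSeq] using hb y
      · intro y; simpa [colSeq] using ha y
    | succ k ih =>
      refine ⟨?_, ?_⟩
      · intro y
        rw [show (1 : ℤ) - ((k+1 : ℕ) : ℤ) = 1 - ((k : ℤ) + 1) by push_cast; ring]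
        exact ih.2 y
      intro y
      have h := hf (1 - ((k : ℤ) + 1), y)
      simp only [discreteLaplacian2] at h
      have e1 : (1 : ℤ) - ((k : ℤ) + 1) + 1 = 1 - (k : ℤ) := by ring
      have e2 : (1 : ℤ) - ((k : ℤ) + 1) - 1 = 1 - ((k : ℤ) + 1 + 1) := by ring
      rw [e1, e2, ih.1 y, ih.2 y, ih.2 (y+1), ih.2 (y-1)] at h
      have : f (1 - ((k : ℤ) + 1 + 1), y) = 4 * colSeq b a (k+1) y - colSeq b a k y
          - colSeq b a (k+1) (y+1) - colSeq b a (k+1) (y-1) := by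
        linear_combination h
      rw [show (1 : ℤ) - (((k+1 : ℕ) : ℤ) + 1) = 1 - ((k : ℤ) + 1 + 1) by push_cast; ring, this]
      simp only [colSeq]
  funext j
  obtain ⟨x, y⟩ := j
  by_cases hx : 0 ≤ x
  · rw [extHarm_pos a b x y hx]
    have := (key x.toNat).1 y
    rwa [Int.toNat_of_nonneg hx] at this
  · rw [extHarm_neg a b x y (by omega)]
    have := (key2 (1 - x).toNat).1 y
    rwa [Int.toNat_of_nonneg (by omega), show (1 : ℤ) - (1 - x) = x by ring] at this

/-- No unique continuation from a double strip with `n` points omitted: for a set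
`P` of `n` points inside the double strip `{j : j₁ ∈ {0,1}}`, every assignment of
values on `P` extends uniquely to a discrete harmonic function on `ℤ²` vanishing on
the double strip outside `P`. Hence the space of such harmonic functions is
`n`-dimensional. -/
theorem n_dim_family_of_continuations (n : ℕ) (P : Finset (ℤ × ℤ))
    (hcard : P.card = n) (hP : ∀ p ∈ P, p.1 = 0 ∨ p.1 = 1)
    (φ : ℤ × ℤ → ℂ) :
    ∃! f : ℤ × ℤ → ℂ,
      (∀ i, discreteLaplacian2 f i = 0) ∧
      (∀ j : ℤ × ℤ, (j.1 = 0 ∨ j.1 = 1) → j ∉ P → f j = 0) ∧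
      (∀ p ∈ P, f p = φ p) := by
  set g : ℤ × ℤ → ℂ := fun j => if j ∈ P then φ j else 0 with hg
  set a : ℤ → ℂ := fun y => g (0, y) with hA
  set b : ℤ → ℂ := fun y => g (1, y) with hB
  have strip : ∀ j : ℤ × ℤ, (j.1 = 0 ∨ j.1 = 1) → extHarm a b j = g j := by
    rintro ⟨x, y⟩ h
    rcases h with h | h <;> subst h
    · rw [extHarm_pos a b 0 y le_rfl]; rfl
    · rw [extHarm_pos a b 1 y (by norm_num)]; rfl
  refine ⟨extHarm a b, ⟨extHarm_harmonic a b, ?_, ?_⟩, ?_⟩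
  · intro j hj hjP
    rw [strip j hj, hg]; simp [hjP]
  · intro p hp
    rw [strip p (hP p hp), hg]; simp [hp]
  · rintro f ⟨hf1, hf2, hf3⟩
    refine eq_extHarm a b f hf1 (fun y => ?_) (fun y => ?_)
    · by_cases h : (0, y) ∈ P
      · rw [hf3 _ h]; simp [hA, hg, h]
      · rw [hf2 (0, y) (Or.inl rfl) h]; simp [hA, hg, h]
    · by_cases h : (1, y) ∈ P
      · rw [hf3 _ h]; simp [hB, hg, h]
      · rw [hf2 (1, y) (Or.inr rfl) h]; simp [hB, hg, h]
end
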